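/- arXiv:1912.00771 — 2 statements merged into one kernel-verified Lean document; each statement's English description precedes it below -/
import Mathlib

section
/- Let A be an m × n real matrix, b ∈ ℝ^m, x_* a solution of Ax = b, and x_k ∈ ℝ^n. Let S be any m × s matrix, and suppose the i-th row of S^T A is nonzero, where i is an index maximizing ((S^T b)_j − (S^T A x_k)_j)². Define x_{k+1} = x_k + ((S^T b)_i − ⟨(S^T A)_i, x_k⟩)/‖(S^T A)_i‖₂² · (S^T A)_i. Then ‖x_{k+1} − x_*‖₂² = ‖x_k − x_*‖₂² − ‖S^T b − S^T A x_k‖_∞² / ‖(S^T A)_i‖₂². -/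
open MeasureTheory ProbabilityTheory Real

/-- Squared Euclidean norm of a vector. -/
noncomputable def norm2sq {n : ℕ} (u : Fin n → ℝ) : ℝ := ∑ i, u i ^ 2

/-- Squared Frobenius norm of a matrix. -/
noncomputable def frobSq {m n : ℕ} (A : Matrix (Fin m) (Fin n) ℝ) : ℝ := ∑ i, ∑ j, A i j ^ 2

/-- Squared smallest singular value: infimum of `‖A u‖₂²` over unit vectors `u`. -/
noncomputable def sminSq {m n : ℕ} (A : Matrix (Fin m) (Fin n) ℝ) : ℝ :=
  sInf {r | ∃ u : Fin n → ℝ, norm2sq u = 1 ∧ r = norm2sq (A.mulVec u)}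

/-- Sup (infinity) norm of a vector. -/
noncomputable def supNorm {s : ℕ} (u : Fin s → ℝ) : ℝ := ⨆ j, |u j|

/-- Pythagorean identity for one step of the sketched Motzkin method: projecting onto the
row of `Sᵀ A` with maximal residual gives
`‖x_{k+1} − x_*‖₂² = ‖x_k − x_*‖₂² − ‖Sᵀb − SᵀA x_k‖_∞² / ‖(SᵀA)_i‖₂²`. -/
theorem sketched_motzkin_step_pythagorean
    {m n s : ℕ} (A : Matrix (Fin m) (Fin n) ℝ) (b : Fin m → ℝ)
    (xstar xk : Fin n → ℝ) (hsol : A.mulVec xstar = b)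
    (S : Matrix (Fin m) (Fin s) ℝ) (i : Fin s)
    (hrow : norm2sq (fun l => (S.transpose * A) i l) ≠ 0)
    (hargmax : ∀ j : Fin s,
      ((S.transpose.mulVec b) j - ((S.transpose * A).mulVec xk) j) ^ 2 ≤
      ((S.transpose.mulVec b) i - ((S.transpose * A).mulVec xk) i) ^ 2)
    (xk1 : Fin n → ℝ)
    (hupdate : xk1 = fun t => xk t +
      ((S.transpose.mulVec b) i - ∑ l, (S.transpose * A) i l * xk l) /
        norm2sq (fun l => (S.transpose * A) i l) * (S.transpose * A) i t) :
    norm2sq (fun t => xk1 t - xstar t) =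
      norm2sq (fun t => xk t - xstar t) -
        (supNorm (fun j => (S.transpose.mulVec b) j - ((S.transpose * A).mulVec xk) j)) ^ 2 /
          norm2sq (fun l => (S.transpose * A) i l) := by
  classical
  set v : Fin s → ℝ := fun j => (S.transpose.mulVec b) j - ((S.transpose * A).mulVec xk) j with hv
  set a : Fin n → ℝ := fun t => (S.transpose * A) i t with ha
  set N : ℝ := norm2sq (fun l => (S.transpose * A) i l) with hN
  set r : ℝ := (S.transpose.mulVec b) i - ∑ l, (S.transpose * A) i l * xk l with hr
  have hvi : v i = r := by
    simp [hv, hr, Matrix.mulVec, dotProduct]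
  haveI : Nonempty (Fin s) := ⟨i⟩
  have hsup : supNorm v = |v i| := by
    rw [supNorm]
    apply le_antisymm
    · apply ciSup_le
      intro j
      have := hargmax j
      have h1 : (v j)^2 ≤ (v i)^2 := this
      nlinarith [abs_nonneg (v i), sq_abs (v i), sq_abs (v j), abs_nonneg (v j)]
    · exact le_ciSup (Set.Finite.bddAbove (Set.finite_range (fun j => |v j|))) i
  have hNe : ∑ t, a t ^ 2 = N := by simp [hN, norm2sq, ha]
  have hax : ∑ t, a t * xstar t = (S.transpose.mulVec b) i := by
    have h2 : (S.transpose * A).mulVec xstar = S.transpose.mulVec b := by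
      rw [← Matrix.mulVec_mulVec, hsol]
    have := congrFun h2 i
    simpa [Matrix.mulVec, dotProduct, ha] using this
  have had : ∑ t, a t * (xk t - xstar t) = -r := by
    have : ∑ t, a t * (xk t - xstar t) = (∑ t, a t * xk t) - ∑ t, a t * xstar t := by
      rw [← Finset.sum_sub_distrib]; congr 1; ext t; ring
    rw [this, hax, hr]; ring
  have hexp : norm2sq (fun t => xk1 t - xstar t)
      = norm2sq (fun t => xk t - xstar t) + 2 * (r/N) * (∑ t, a t * (xk t - xstar t))
        + (r/N)^2 * (∑ t, a t ^ 2) := by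
    subst hupdate
    simp only [norm2sq, Finset.mul_sum, ← Finset.sum_add_distrib]
    congr 1; ext t; ring
  rw [hexp, had, hNe, hsup, sq_abs, hvi]
  have hN0 : N ≠ 0 := hrow
  field_simp
  ring
end

section
/- Let A be an m × n matrix with full column rank and rows a_1, …, a_m all nonzero. For a consistent system Ax = b with solution x_*, the randomized Kaczmarz update x_{k+1} = x_k + (b_i − ⟨a_i, x_k⟩)/‖a_i‖₂² · a_i, with row index i chosen with probability ‖a_i‖₂²/‖A‖_F², satisfies E[‖x_{k+1} − x_*‖₂² | x_k] ≤ (1 − σ_min²(A)/‖A‖_F²)·‖x_k − x_*‖₂². -/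
open MeasureTheory ProbabilityTheory Real

lemma norm2sq_nonneg {n : ℕ} (u : Fin n → ℝ) : 0 ≤ norm2sq u :=
  Finset.sum_nonneg fun i _ => sq_nonneg _

lemma norm2sq_pos {n : ℕ} {u : Fin n → ℝ} (hu : u ≠ 0) : 0 < norm2sq u := by
  rcases (norm2sq_nonneg u).lt_or_eq with h | h
  · exact h
  · exfalso; apply hu; funext i
    have := (Finset.sum_eq_zero_iff_of_nonneg (fun i _ => sq_nonneg (u i))).mp h.symm i
      (Finset.mem_univ i)
    exact pow_eq_zero_iff (two_ne_zero) |>.mp this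

lemma sminSq_key {m n : ℕ} (A : Matrix (Fin m) (Fin n) ℝ) (e : Fin n → ℝ) :
    sminSq A * norm2sq e ≤ norm2sq (A.mulVec e) := by
  by_cases he : e = 0
  · subst he
    simp [norm2sq, Matrix.mulVec, dotProduct]
  · have hs : 0 < norm2sq e := norm2sq_pos he
    set s := norm2sq e with hsdef
    set c : ℝ := (Real.sqrt s)⁻¹ with hc
    have hsqrt : 0 < Real.sqrt s := Real.sqrt_pos.mpr hs
    have hc2 : c ^ 2 = s⁻¹ := by
      rw [hc, ← Real.sqrt_inv]
      exact Real.sq_sqrt (by positivity)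
    have hmem : norm2sq (A.mulVec e) / s ∈
        {r | ∃ u : Fin n → ℝ, norm2sq u = 1 ∧ r = norm2sq (A.mulVec u)} := by
      refine ⟨fun t => c * e t, ?_, ?_⟩
      · have : norm2sq (fun t => c * e t) = c ^ 2 * s := by
          simp [norm2sq, mul_pow, ← Finset.mul_sum, hsdef]
        rw [this, hc2]
        field_simp
      · have hmv : A.mulVec (fun t => c * e t) = fun i => c * A.mulVec e i := by
          funext i
          simp [Matrix.mulVec, dotProduct, Finset.mul_sum]
          apply Finset.sum_congr rfl
          intro t _; ring
        rw [hmv]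
        have : norm2sq (fun i => c * A.mulVec e i) = c ^ 2 * norm2sq (A.mulVec e) := by
          simp [norm2sq, mul_pow, ← Finset.mul_sum]
        rw [this, hc2]
        field_simp
    have hbdd : BddBelow {r | ∃ u : Fin n → ℝ, norm2sq u = 1 ∧ r = norm2sq (A.mulVec u)} := by
      refine ⟨0, ?_⟩
      rintro r ⟨u, -, rfl⟩
      exact norm2sq_nonneg _
    have := csInf_le hbdd hmem
    rw [sminSq]
    calc sInf _ * s ≤ (norm2sq (A.mulVec e) / s) * s := by
          exact mul_le_mul_of_nonneg_right this hs.le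
      _ = norm2sq (A.mulVec e) := by field_simp

/-- Strohmer–Vershynin single-step contraction for randomized Kaczmarz: choosing row `i`
with probability `‖a_i‖₂²/‖A‖_F²`, the expected squared error contracts by the factor
`1 − σ_min²(A)/‖A‖_F²`. -/
theorem randomized_kaczmarz_one_step
    {m n : ℕ} (A : Matrix (Fin m) (Fin n) ℝ) (hrank : A.rank = n)
    (hrows : ∀ j : Fin m, (fun l => A j l) ≠ 0)
    (b : Fin m → ℝ) (xstar : Fin n → ℝ) (hsol : A.mulVec xstar = b)
    (xk : Fin n → ℝ) :
    ∑ i : Fin m, (norm2sq (fun l => A i l) / frobSq A) *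
        norm2sq (fun t =>
          (xk t + (b i - ∑ l, A i l * xk l) / norm2sq (fun l => A i l) * A i t) - xstar t) ≤
      (1 - sminSq A / frobSq A) * norm2sq (fun t => xk t - xstar t) := by
  rcases Nat.eq_zero_or_pos m with hm | hm
  · subst hm
    simp [frobSq, div_zero]
    exact norm2sq_nonneg _
  have hne : Nonempty (Fin m) := ⟨⟨0, hm⟩⟩
  set E := norm2sq (fun t => xk t - xstar t) with hE
  set d : Fin m → ℝ := fun i => ∑ l, A i l * (xk l - xstar l) with hd
  have hS : ∀ i, 0 < norm2sq (fun l => A i l) := fun i => norm2sq_pos (hrows i)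
  have hFr : frobSq A = ∑ i, norm2sq (fun l => A i l) := rfl
  have hF : 0 < frobSq A := by
    rw [hFr]
    exact Finset.sum_pos (fun i _ => hS i) Finset.univ_nonempty
  have hb : ∀ i, b i = ∑ l, A i l * xstar l := by
    intro i; rw [← hsol]; rfl
  have hterm : ∀ i, norm2sq (fun t =>
      (xk t + (b i - ∑ l, A i l * xk l) / norm2sq (fun l => A i l) * A i t) - xstar t)
      = E - d i ^ 2 / norm2sq (fun l => A i l) := by
    intro i
    have hSi : norm2sq (fun l => A i l) ≠ 0 := (hS i).ne'
    set S := norm2sq (fun l => A i l) with hSdef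
    have h1 : b i - ∑ l, A i l * xk l = -d i := by
      rw [hb i, hd]
      simp [mul_sub, Finset.sum_sub_distrib]
    calc norm2sq (fun t => (xk t + (b i - ∑ l, A i l * xk l) / S * A i t) - xstar t)
        = ∑ t, ((xk t - xstar t) ^ 2 - 2 * (d i / S) * (A i t * (xk t - xstar t))
            + (d i / S) ^ 2 * A i t ^ 2) := by
          unfold norm2sq
          apply Finset.sum_congr rfl
          intro t _
          rw [h1]
          ring
      _ = E - 2 * (d i / S) * d i + (d i / S) ^ 2 * S := by
          rw [Finset.sum_add_distrib, Finset.sum_sub_distrib, ← Finset.mul_sum,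
            ← Finset.mul_sum]
          rw [hE, hd, hSdef]
          simp [norm2sq]
      _ = E - d i ^ 2 / S := by field_simp; ring
  have hAe : ∑ i, d i ^ 2 = norm2sq (A.mulVec fun t => xk t - xstar t) := rfl
  have hkey : sminSq A * E ≤ ∑ i, d i ^ 2 := by
    rw [hAe, hE]
    exact sminSq_key A _
  calc ∑ i : Fin m, (norm2sq (fun l => A i l) / frobSq A) *
        norm2sq (fun t =>
          (xk t + (b i - ∑ l, A i l * xk l) / norm2sq (fun l => A i l) * A i t) - xstar t)
      = ∑ i : Fin m, (norm2sq (fun l => A i l) * E / frobSq A - d i ^ 2 / frobSq A) := by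
        apply Finset.sum_congr rfl
        intro i _
        rw [hterm i]
        have hSi : (norm2sq fun l => A i l) ≠ 0 := (hS i).ne'
        field_simp
    _ = (∑ i, norm2sq (fun l => A i l)) * E / frobSq A - (∑ i, d i ^ 2) / frobSq A := by
        rw [Finset.sum_sub_distrib, ← Finset.sum_div, ← Finset.sum_div, ← Finset.sum_mul]
    _ = E - (∑ i, d i ^ 2) / frobSq A := by
        rw [← hFr]
        field_simp
    _ ≤ E - sminSq A * E / frobSq A := by
        have h2 : sminSq A * E / frobSq A ≤ (∑ i, d i ^ 2) / frobSq A :=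
          (div_le_div_iff_of_pos_right hF).mpr hkey
        linarith
    _ = (1 - sminSq A / frobSq A) * E := by ring
end
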